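/- Let (X,d) be an indecomposable metric continuum. Then there exists a sequence (K_n)_{n<ω} of pairwise disjoint proper subcontinua of X such that d_H(K_n, X) := sup_{x∈X} d(x, K_n) → 0 as n → ∞. -/

import Mathlib

set_option linter.unusedSectionVars false

open Set Metric Filter Topology

/-- The connected component of a point in a closed set is closed. -/
lemma aux_ccIn_closed {X : Type*} [TopologicalSpace X] {E : Set X} (hE : IsClosed E) (x : X) :
    IsClosed (connectedComponentIn E x) := by
  by_cases hx : x ∈ E
  · refine isClosed_of_closure_subset ?_
    exact (isPreconnected_connectedComponentIn.closure).subset_connectedComponentIn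
      (subset_closure (mem_connectedComponentIn hx))
      (closure_minimal (connectedComponentIn_subset E x) hE)
  · rw [connectedComponentIn_eq_empty hx]; exact isClosed_empty

/-- Boundary bumping: the component of a point of a proper closed subset of a continuum
meets the frontier of the set. -/
lemma aux_bump {X : Type*} [MetricSpace X] [CompactSpace X] [ConnectedSpace X]
    {E : Set X} (hE : IsClosed E) (hEu : E ≠ univ) {p : X} (hp : p ∈ E) :
    (connectedComponentIn E p ∩ frontier E).Nonempty := by
  by_contra hcon
  rw [Set.not_nonempty_iff_eq_empty] at hcon
  haveI : CompactSpace E := isCompact_iff_compactSpace.mp hE.isCompact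
  set p' : E := ⟨p, hp⟩
  have hcc : connectedComponentIn E p = (↑) '' connectedComponent p' :=
    connectedComponentIn_eq_image hp
  set G : Set E := (↑) ⁻¹' (frontier E) with hGdef
  have hGc : IsCompact G := (isClosed_frontier.preimage continuous_subtype_val).isCompact
  have hdisj : G ∩ ⋂ Z : {Z : Set E // IsClopen Z ∧ p' ∈ Z}, (Z : Set E) = ∅ := by
    rw [← connectedComponent_eq_iInter_isClopen p']
    ext z
    simp only [mem_inter_iff, mem_empty_iff_false, iff_false, not_and]
    intro hzG hzc
    have : (z : X) ∈ connectedComponentIn E p ∩ frontier E :=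
      ⟨hcc ▸ ⟨z, hzc, rfl⟩, hzG⟩
    rw [hcon] at this; exact this
  obtain ⟨t, ht⟩ := hGc.elim_finite_subfamily_closed _ (fun Z => Z.2.1.isClosed) hdisj
  set W : Set E := ⋂ Z ∈ t, (Z : Set E) with hWdef
  have hWclopen : IsClopen W := isClopen_biInter_finset fun Z _ => Z.2.1
  have hpW : p' ∈ W := mem_iInter₂.mpr fun Z _ => Z.2.2
  set A : Set X := (↑) '' W with hAdef
  have hAE : A ⊆ E := by rintro a ⟨z, _, rfl⟩; exact z.2
  have hAclosed : IsClosed A :=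
    ((hWclopen.isClosed.isCompact).image continuous_subtype_val).isClosed
  have hAfrontier : A ∩ frontier E = ∅ := by
    ext a
    simp only [mem_inter_iff, mem_empty_iff_false, iff_false, not_and]
    rintro ⟨z, hzW, rfl⟩ hfa
    have : z ∈ G ∩ ⋂ Z ∈ t, (Z : Set E) := ⟨hfa, mem_iInter₂.mpr fun Z hZ => mem_iInter₂.mp hzW Z hZ⟩
    rw [ht] at this; exact this
  -- A is open
  obtain ⟨V, hV, hVW⟩ := isOpen_induced_iff.mp hWclopen.isOpen
  have hAeq : A = V ∩ E := by
    rw [hAdef, ← hVW, Subtype.image_preimage_coe, inter_comm]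
  have hAint : A ⊆ interior E := by
    intro a ha
    have haE : a ∈ E := hAE ha
    have : a ∉ frontier E := fun hf => by
      have : a ∈ A ∩ frontier E := ⟨ha, hf⟩
      rw [hAfrontier] at this; exact this
    rw [hE.frontier_eq] at this
    simp only [mem_diff, not_and, not_not] at this
    exact this haE
  have hAopen : IsOpen A := by
    have : A = V ∩ interior E := by
      apply Subset.antisymm
      · exact subset_inter (hAeq ▸ inter_subset_left) hAint
      · intro a ⟨haV, haI⟩
        rw [hAeq]; exact ⟨haV, interior_subset haI⟩
    rw [this]; exact hV.inter isOpen_interior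
  have : A = univ := IsClopen.eq_univ ⟨hAclosed, hAopen⟩ ⟨p, ⟨p', hpW, rfl⟩⟩
  exact hEu (univ_subset_iff.mp (this ▸ hAE))

section Main
variable {X : Type*} [MetricSpace X] [CompactSpace X] [ConnectedSpace X] [Nontrivial X]

/-- "Good" sets: nonempty proper closed connected subsets (possibly singletons). -/
def SGood (A : Set X) : Prop := IsClosed A ∧ IsPreconnected A ∧ A.Nonempty ∧ A ≠ univ

variable (hindec : ¬ ∃ A B : Set X,
      IsClosed A ∧ IsConnected A ∧ A ≠ Set.univ ∧
      IsClosed B ∧ IsConnected B ∧ B ≠ Set.univ ∧ A ∪ B = Set.univ)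

include hindec in
/-- Union of two intersecting good sets is good. -/
lemma aux_union_good {A B : Set X} (hA : SGood A) (hB : SGood B) (hAB : (A ∩ B).Nonempty) :
    SGood (A ∪ B) := by
  obtain ⟨x, hxA, hxB⟩ := hAB
  refine ⟨hA.1.union hB.1, hA.2.1.union x hxA hxB hB.2.1, ⟨x, Or.inl hxA⟩, ?_⟩
  intro hu
  exact hindec ⟨A, B, hA.1, ⟨hA.2.2.1, hA.2.1⟩, hA.2.2.2, hB.1, ⟨hB.2.2.1, hB.2.1⟩, hB.2.2.2, hu⟩

include hindec in
/-- Finite unions of good sets through a common point are good. -/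
lemma aux_biUnion_good {ι : Type*} {t : Finset ι} (hne : t.Nonempty) {A : ι → Set X} {p : X}
    (hA : ∀ i ∈ t, SGood (A i) ∧ p ∈ A i) :
    SGood (⋃ i ∈ t, A i) ∧ p ∈ ⋃ i ∈ t, A i := by
  induction hne using Finset.Nonempty.cons_induction with
  | singleton i => simpa using hA i (Finset.mem_singleton_self i)
  | cons i t hit htne ih =>
      have h1 := ih (fun j hj => hA j (Finset.mem_cons_of_mem hj))
      have h2 := hA i (Finset.mem_cons_self i t)
      have hrw : (⋃ j ∈ Finset.cons i t hit, A j) = A i ∪ ⋃ j ∈ t, A j := by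
        simp [Finset.set_biUnion_insert]
      rw [hrw]
      exact ⟨aux_union_good hindec h2.1 h1.1 ⟨p, h2.2, h1.2⟩, Or.inl h2.2⟩


include hindec in
/-- In an indecomposable continuum, every good set has empty interior. -/
lemma aux_interior_empty {A : Set X} (hA : SGood A) : interior A = ∅ := by
  by_contra hint
  obtain ⟨x₀, hx₀⟩ := nonempty_iff_ne_empty.mpr hint
  obtain ⟨p, hpA⟩ : ∃ p, p ∉ A := by
    by_contra h; push_neg at h; exact hA.2.2.2 (eq_univ_of_forall h)
  obtain ⟨a₀, ha₀⟩ := hA.2.2.1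
  set E : Set X := (interior A)ᶜ with hEdef
  have hEclosed : IsClosed E := isOpen_interior.isClosed_compl
  have hEu : E ≠ univ := by
    intro h
    have : x₀ ∈ E := h ▸ mem_univ x₀
    exact this hx₀
  have hpE : p ∈ E := fun h => hpA (interior_subset h)
  have hfrA : frontier E ⊆ A := by
    rw [hEdef, frontier_compl]
    exact (frontier_subset_closure.trans (closure_mono interior_subset)).trans
      (le_of_eq hA.1.closure_eq)
  have hAE : A ∪ E = univ := by
    ext a
    simp only [mem_union, mem_univ, iff_true, hEdef, mem_compl_iff]
    by_cases h : a ∈ A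
    · exact Or.inl h
    · exact Or.inr fun hi => h (interior_subset hi)
  -- each component of E, together with A, is preconnected
  have hcomp : ∀ y ∈ E, IsPreconnected (A ∪ connectedComponentIn E y) := by
    intro y hy
    obtain ⟨w, hw1, hw2⟩ := aux_bump hEclosed hEu hy
    exact IsPreconnected.union w (hfrA hw2) hw1 hA.2.1 isPreconnected_connectedComponentIn
  by_cases hcase : A ∪ connectedComponentIn E p = univ
  · exact hindec ⟨A, connectedComponentIn E p, hA.1, ⟨hA.2.2.1, hA.2.1⟩, hA.2.2.2,
      aux_ccIn_closed hEclosed p,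
      ⟨⟨p, mem_connectedComponentIn hpE⟩, isPreconnected_connectedComponentIn⟩,
      fun h => hEu (univ_subset_iff.mp (h ▸ connectedComponentIn_subset E p)),
      hcase⟩
  · obtain ⟨q, hq⟩ : ∃ q, q ∉ A ∪ connectedComponentIn E p := by
      by_contra h; push_neg at h; exact hcase (eq_univ_of_forall h)
    have hqA : q ∉ A := fun h => hq (Or.inl h)
    have hqC : q ∉ connectedComponentIn E p := fun h => hq (Or.inr h)
    have hqE : q ∈ E := fun h => hqA (interior_subset h)
    haveI : CompactSpace E := isCompact_iff_compactSpace.mp hEclosed.isCompact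
    set p' : E := ⟨p, hpE⟩
    set q' : E := ⟨q, hqE⟩
    have hq' : q' ∉ connectedComponent p' := by
      intro h
      exact hqC ((connectedComponentIn_eq_image hpE) ▸ ⟨q', h, rfl⟩)
    rw [connectedComponent_eq_iInter_isClopen p'] at hq'
    obtain ⟨Z, hZq⟩ : ∃ Z : {Z : Set E // IsClopen Z ∧ p' ∈ Z}, q' ∉ (Z : Set E) := by
      by_contra h; push_neg at h; exact hq' (mem_iInter.mpr h)
    set A₀ : Set X := (↑) '' (Z : Set E) with hA₀def
    set F₀ : Set X := (↑) '' ((Z : Set E)ᶜ) with hF₀def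
    have hA₀closed : IsClosed A₀ := (Z.2.1.isClosed.isCompact.image continuous_subtype_val).isClosed
    have hF₀closed : IsClosed F₀ :=
      ((Z.2.1.compl.isClosed.isCompact).image continuous_subtype_val).isClosed
    have hunion : A₀ ∪ F₀ = E := by
      rw [hA₀def, hF₀def, ← image_union, union_compl_self, image_univ, Subtype.range_coe]
    -- preconnectedness of A ∪ (val '' clopen)
    have hkey : ∀ (W : Set E), IsClopen W → W.Nonempty → IsPreconnected (A ∪ (↑) '' W) := by
      intro W hW hWne
      have himg : A ∪ (↑) '' W = ⋃ y : W, (A ∪ (↑) '' connectedComponent (y : E)) := by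
        apply Subset.antisymm
        · rintro a (ha | ⟨z, hz, rfl⟩)
          · exact mem_iUnion.mpr ⟨⟨hWne.some, hWne.some_mem⟩, Or.inl ha⟩
          · exact mem_iUnion.mpr ⟨⟨z, hz⟩, Or.inr ⟨z, mem_connectedComponent, rfl⟩⟩
        · refine iUnion_subset fun y => ?_
          refine union_subset subset_union_left ?_
          have hsub : connectedComponent (y : E) ⊆ W :=
            isPreconnected_connectedComponent.subset_isClopen hW
              ⟨y, mem_connectedComponent, y.2⟩
          exact (image_mono hsub).trans subset_union_right
      rw [himg]
      refine isPreconnected_iUnion ⟨a₀, mem_iInter.mpr fun y => Or.inl ha₀⟩ fun y => ?_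
      have : ((↑) '' connectedComponent (y : E) : Set X) =
          connectedComponentIn E ((y : E) : X) := by
        rw [connectedComponentIn_eq_image (y : E).2]
      rw [this]
      exact hcomp _ (y : E).2
    have hB₁ := hkey Z Z.2.1 ⟨p', Z.2.2⟩
    have hB₂ := hkey (Z : Set E)ᶜ Z.2.1.compl ⟨q', hZq⟩
    refine hindec ⟨A ∪ A₀, A ∪ F₀, hA.1.union hA₀closed, ⟨⟨a₀, Or.inl ha₀⟩, hB₁⟩, ?_,
      hA.1.union hF₀closed, ⟨⟨a₀, Or.inl ha₀⟩, hB₂⟩, ?_, ?_⟩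
    · intro h
      have : q ∈ A ∪ A₀ := h ▸ mem_univ q
      rcases this with h' | ⟨z, hz, hzq⟩
      · exact hqA h'
      · exact hZq (by rwa [show z = q' from Subtype.ext hzq] at hz)
    · intro h
      have : p ∈ A ∪ F₀ := h ▸ mem_univ p
      rcases this with h' | ⟨z, hz, hzp⟩
      · exact hpA h'
      · exact (show z = p' from Subtype.ext hzp) ▸ hz <| Z.2.2
    · rw [union_union_union_comm, union_self, hunion, hAE]


/-- The composant of `p`: union of all good sets containing `p`. -/
def Comp (p : X) : Set X := {x | ∃ A : Set X, SGood A ∧ p ∈ A ∧ x ∈ A}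

lemma aux_singleton_good (p : X) : SGood ({p} : Set X) := by
  refine ⟨isClosed_singleton, isPreconnected_singleton, ⟨p, rfl⟩, ?_⟩
  obtain ⟨y, hy⟩ := exists_ne p
  intro h
  have : y ∈ ({p} : Set X) := h ▸ mem_univ y
  exact hy this

lemma aux_mem_comp_self (p : X) : p ∈ Comp p :=
  ⟨{p}, aux_singleton_good p, rfl, rfl⟩

include hindec in
lemma aux_comp_disjoint {p q : X} (h : q ∉ Comp p) : Disjoint (Comp p) (Comp q) := by
  rw [Set.disjoint_left]
  rintro z ⟨A, hA, hpA, hzA⟩ ⟨B, hB, hqB, hzB⟩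
  exact h ⟨A ∪ B, aux_union_good hindec hA hB ⟨z, hzA, hzB⟩, Or.inl hpA, Or.inr hqB⟩

/-- One can reach any `δ`-ball with a good set containing `p`. -/
lemma aux_reach (p y : X) {δ : ℝ} (hδ : 0 < δ) :
    ∃ A : Set X, SGood A ∧ p ∈ A ∧ ∃ z ∈ A, dist z y < δ := by
  by_cases hpb : p ∈ ball y δ
  · exact ⟨{p}, aux_singleton_good p, rfl, p, rfl, mem_ball.mp hpb⟩
  · set E : Set X := (ball y (δ / 2))ᶜ with hEdef
    have hEclosed : IsClosed E := isOpen_ball.isClosed_compl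
    have hpE : p ∈ E := by
      intro hpb'
      exact hpb (ball_subset_ball (by linarith) hpb')
    have hEu : E ≠ univ := by
      intro h
      have : y ∈ E := h ▸ mem_univ y
      exact this (mem_ball_self (by linarith))
    obtain ⟨w, hw1, hw2⟩ := aux_bump hEclosed hEu hpE
    refine ⟨connectedComponentIn E p,
      ⟨aux_ccIn_closed hEclosed p, isPreconnected_connectedComponentIn,
        ⟨p, mem_connectedComponentIn hpE⟩,
        fun h => hEu (univ_subset_iff.mp (h ▸ connectedComponentIn_subset E p))⟩,
      mem_connectedComponentIn hpE, w, hw1, ?_⟩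
    have : w ∈ closedBall y (δ / 2) := by
      rw [hEdef, frontier_compl] at hw2
      exact closure_ball_subset_closedBall (frontier_subset_closure hw2)
    calc dist w y ≤ δ / 2 := mem_closedBall.mp this
      _ < δ := by linarith

/-- Every point lies in a nontrivial good set. -/
lemma aux_nontrivial_piece (p : X) : ∃ A : Set X, SGood A ∧ p ∈ A ∧ A.Nontrivial := by
  obtain ⟨q, hq⟩ := exists_ne p
  have hr : 0 < dist p q / 3 := by
    have := dist_pos.mpr (fun h => hq h.symm)
    linarith
  set r : ℝ := dist p q / 3 with hrdef
  set E : Set X := (ball q r)ᶜ with hEdef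
  have hEclosed : IsClosed E := isOpen_ball.isClosed_compl
  have hpE : p ∈ E := by
    intro h
    have : dist p q < r := mem_ball.mp h
    rw [hrdef] at this; linarith
  have hEu : E ≠ univ := by
    intro h
    have : q ∈ E := h ▸ mem_univ q
    exact this (mem_ball_self hr)
  obtain ⟨w, hw1, hw2⟩ := aux_bump hEclosed hEu hpE
  have hwq : dist w q ≤ r := by
    rw [hEdef, frontier_compl] at hw2
    exact mem_closedBall.mp (closure_ball_subset_closedBall (frontier_subset_closure hw2))
  have hwp : w ≠ p := by
    intro h
    have h3 : dist p q ≤ dist p w + dist w q := dist_triangle p w q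
    rw [h] at hwq
    rw [dist_comm p w, h, dist_self] at h3
    rw [hrdef] at hwq
    linarith
  exact ⟨connectedComponentIn E p,
    ⟨aux_ccIn_closed hEclosed p, isPreconnected_connectedComponentIn,
      ⟨p, mem_connectedComponentIn hpE⟩,
      fun h => hEu (univ_subset_iff.mp (h ▸ connectedComponentIn_subset E p))⟩,
    mem_connectedComponentIn hpE, w, hw1, p, mem_connectedComponentIn hpE, hwp⟩


include hindec in
/-- For every `p` and `ε > 0` there is a nontrivial good set containing `p`
that is `ε`-dense in `X`. -/
lemma aux_eps_continuum (p : X) {ε : ℝ} (hε : 0 < ε) :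
    ∃ K : Set X, SGood K ∧ p ∈ K ∧ K.Nontrivial ∧ ∀ x, infDist x K < ε := by
  have hcover : (univ : Set X) ⊆ ⋃ y : X, ball y (ε / 2) :=
    fun x _ => mem_iUnion.mpr ⟨x, mem_ball_self (by linarith)⟩
  obtain ⟨t, ht⟩ := isCompact_univ.elim_finite_subcover _ (fun y : X => isOpen_ball) hcover
  choose A hA hpA z hzA hzd using fun y : X => aux_reach p y (half_pos hε)
  have htne : t.Nonempty := by
    obtain ⟨x, -, -⟩ := exists_pair_ne X
    obtain ⟨y, hy, -⟩ := mem_iUnion₂.mp (ht (mem_univ x))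
    exact ⟨y, hy⟩
  obtain ⟨hK₀, hpK₀⟩ := aux_biUnion_good hindec htne (fun y _ => ⟨hA y, hpA y⟩)
  obtain ⟨N, hN, hpN, hNnt⟩ := aux_nontrivial_piece (X := X) p
  refine ⟨N ∪ ⋃ y ∈ t, A y, aux_union_good hindec hN hK₀ ⟨p, hpN, hpK₀⟩, Or.inl hpN,
    hNnt.mono subset_union_left, ?_⟩
  intro x
  obtain ⟨y, hyt, hxy⟩ := mem_iUnion₂.mp (ht (mem_univ x))
  have hzK : z y ∈ N ∪ ⋃ y ∈ t, A y := Or.inr (mem_iUnion₂.mpr ⟨y, hyt, hzA y⟩)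
  calc infDist x (N ∪ ⋃ y ∈ t, A y) ≤ dist x (z y) := infDist_le_dist_of_mem hzK
    _ ≤ dist x y + dist y (z y) := dist_triangle x y (z y)
    _ < ε / 2 + ε / 2 := by
        have h1 : dist x y < ε / 2 := mem_ball.mp hxy
        have h2 : dist y (z y) < ε / 2 := by rw [dist_comm]; exact hzd y
        linarith
    _ = ε := by ring

include hindec in
/-- The composant of `p` is covered by countably many closed sets with empty interior. -/
lemma aux_comp_meager (p : X) : ∃ D : ℕ → Set X,
    (∀ n, IsClosed (D n) ∧ interior (D n) = ∅) ∧ Comp p ⊆ ⋃ n, D n := by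
  obtain ⟨u, hu⟩ := TopologicalSpace.exists_dense_seq X
  set E : ℕ → Set X := fun n => (ball (u n.unpair.1) (1 / (n.unpair.2 + 1)))ᶜ with hEdef
  have hEclosed : ∀ n, IsClosed (E n) := fun n => isOpen_ball.isClosed_compl
  have hEu : ∀ n, E n ≠ univ := by
    intro n h
    have : u n.unpair.1 ∈ E n := h ▸ mem_univ _
    exact this (mem_ball_self (by positivity))
  classical
  set D : ℕ → Set X := fun n =>
    if p ∈ E n then connectedComponentIn (E n) p else ∅ with hDdef
  refine ⟨D, fun n => ?_, ?_⟩
  · by_cases hpn : p ∈ E n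
    · have hDn : D n = connectedComponentIn (E n) p := if_pos hpn
      rw [hDn]
      refine ⟨aux_ccIn_closed (hEclosed n) p, aux_interior_empty hindec ?_⟩
      exact ⟨aux_ccIn_closed (hEclosed n) p, isPreconnected_connectedComponentIn,
        ⟨p, mem_connectedComponentIn hpn⟩,
        fun h => hEu n (univ_subset_iff.mp (h ▸ connectedComponentIn_subset (E n) p))⟩
    · have hDn : D n = ∅ := if_neg hpn
      rw [hDn]; exact ⟨isClosed_empty, interior_empty⟩
  · rintro x ⟨A, hA, hpA, hxA⟩
    obtain ⟨y, hyA⟩ : ∃ y, y ∉ A := by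
      by_contra h; push_neg at h; exact hA.2.2.2 (eq_univ_of_forall h)
    have hρ : 0 < infDist y A := (hA.1.notMem_iff_infDist_pos hA.2.2.1).mp hyA
    obtain ⟨m, hm⟩ := exists_nat_one_div_lt (half_pos hρ)
    obtain ⟨k, hk⟩ := hu.exists_dist_lt y (show (0:ℝ) < 1 / (m + 1) by positivity)
    set n := Nat.pair k m with hndef
    have hun : n.unpair = (k, m) := by rw [hndef, Nat.unpair_pair]
    have hsub : A ⊆ E n := by
      intro a ha hball
      simp only [hEdef, hun] at hball
      have h1 : dist a (u k) < 1 / (m + 1) := mem_ball.mp hball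
      have h2 : dist y a ≤ dist y (u k) + dist (u k) a := dist_triangle y (u k) a
      have h3 : infDist y A ≤ dist y a := infDist_le_dist_of_mem ha
      rw [dist_comm (u k) a] at h2
      have h4 : dist y (u k) < 1 / (m + 1) := hk
      linarith
    have hpE : p ∈ E n := hsub hpA
    refine mem_iUnion.mpr ⟨n, ?_⟩
    have hDn : D n = connectedComponentIn (E n) p := if_pos hpE
    rw [hDn]
    exact hA.2.1.subset_connectedComponentIn hpA hsub hxA

include hindec in
/-- Avoidance of finitely many composants. -/
lemma aux_avoid (s : Finset X) : ∃ q : X, ∀ p ∈ s, q ∉ Comp p := by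
  choose D hD hcov using fun p : {p // p ∈ s} => aux_comp_meager hindec (p : X)
  have hdense : Dense (⋂ i : {p // p ∈ s} × ℕ, (D i.1 i.2)ᶜ) := by
    refine dense_iInter_of_isOpen (fun i => (hD i.1 i.2).1.isOpen_compl) fun i => ?_
    exact interior_eq_empty_iff_dense_compl.mp (hD i.1 i.2).2
  obtain ⟨q, hq⟩ := hdense.nonempty
  refine ⟨q, fun p hp hqc => ?_⟩
  obtain ⟨n, hn⟩ := mem_iUnion.mp (hcov ⟨p, hp⟩ hqc)
  exact (mem_iInter.mp hq (⟨p, hp⟩, n)) hn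

end Main

/-- Let `(X, d)` be an indecomposable metric continuum. Then there is a
sequence of pairwise disjoint proper subcontinua `K n` of `X` with
`d_H(K n, X) = sup_{x ∈ X} d(x, K n) → 0`. -/
theorem stmt_5 {X : Type*} [MetricSpace X] [CompactSpace X] [ConnectedSpace X] [Nontrivial X]
    (hindec : ¬ ∃ A B : Set X,
      IsClosed A ∧ IsConnected A ∧ A ≠ Set.univ ∧
      IsClosed B ∧ IsConnected B ∧ B ≠ Set.univ ∧ A ∪ B = Set.univ) :
    ∃ K : ℕ → Set X,
      (∀ n, IsCompact (K n) ∧ IsConnected (K n) ∧ (K n).Nontrivial ∧ K n ≠ Set.univ) ∧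
      (∀ m n, m ≠ n → Disjoint (K m) (K n)) ∧
      Filter.Tendsto (fun n => ⨆ x : X, Metric.infDist x (K n)) Filter.atTop (nhds 0) := by
  classical
  choose qf hqf using fun s : Finset X => aux_avoid hindec s
  set S : ℕ → Finset X := fun n => Nat.rec ∅ (fun _ Sn => insert (qf Sn) Sn) n with hSdef
  set pt : ℕ → X := fun n => qf (S n) with hptdef
  have hS : ∀ n, S (n + 1) = insert (pt n) (S n) := fun n => rfl
  have hmem : ∀ i n, i < n → pt i ∈ S n := by
    intro i n h
    induction n with
    | zero => omega
    | succ n ih =>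
        rw [hS n]
        rcases Nat.lt_succ_iff_lt_or_eq.mp h with h' | h'
        · exact Finset.mem_insert_of_mem (ih h')
        · subst h'; exact Finset.mem_insert_self _ _
  have hout : ∀ i n, i < n → pt n ∉ Comp (pt i) := fun i n h => hqf (S n) _ (hmem i n h)
  have hdisj : ∀ i n, i < n → Disjoint (Comp (pt i)) (Comp (pt n)) :=
    fun i n h => aux_comp_disjoint hindec (hout i n h)
  have hKex := fun n : ℕ => aux_eps_continuum hindec (pt n)
      (show (0:ℝ) < 1 / (n + 1) by positivity)
  choose K hK hpK hKnt hKd using hKex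
  have hKsub : ∀ n, K n ⊆ Comp (pt n) := fun n x hx => ⟨K n, hK n, hpK n, hx⟩
  refine ⟨K, fun n => ⟨(hK n).1.isCompact, ⟨(hK n).2.2.1, (hK n).2.1⟩, hKnt n, (hK n).2.2.2⟩,
    ?_, ?_⟩
  · intro m n hmn
    rcases hmn.lt_or_gt with h | h
    · exact (hdisj m n h).mono (hKsub m) (hKsub n)
    · exact ((hdisj n m h).mono (hKsub n) (hKsub m)).symm
  · have h0 : ∀ n : ℕ, 0 ≤ ⨆ x : X, infDist x (K n) :=
      fun n => Real.iSup_nonneg fun x => infDist_nonneg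
    have h1 : ∀ n : ℕ, (⨆ x : X, infDist x (K n)) ≤ 1 / (n + 1) :=
      fun n => ciSup_le fun x => (hKd n x).le
    exact squeeze_zero h0 h1 tendsto_one_div_add_atTop_nhds_zero_nat
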